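/- Let G be a connected non-bipartite k-regular simple graph on a nonempty finite vertex type, with real adjacency matrix A₀, and define recursively A_{m+1} = fromBlocks A_m 1 1 A_m. Then for every N, the number k + N is an eigenvalue of A_N but -(k + N) is not an eigenvalue of A_N; in particular the multiset of eigenvalues of A_N is not invariant under negation, i.e. the eigenvalue distribution of the iterated graph cylinder of a non-bipartite graph is asymmetric. -/

import Mathlib

/-- The index type of the `N`-fold iterated graph cylinder matrix over base index `V`. -/
def CylIdx (V : Type*) : ℕ → Type _
  | 0 => V
  | N + 1 => CylIdx V N ⊕ CylIdx V N

instance instFintypeCylIdx (V : Type*) [Fintype V] : ∀ N, Fintype (CylIdx V N)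
  | 0 => ‹Fintype V›
  | N + 1 => letI := instFintypeCylIdx V N
             inferInstanceAs (Fintype (CylIdx V N ⊕ CylIdx V N))

instance instDecidableEqCylIdx (V : Type*) [DecidableEq V] : ∀ N, DecidableEq (CylIdx V N)
  | 0 => ‹DecidableEq V›
  | N + 1 => letI := instDecidableEqCylIdx V N
             inferInstanceAs (DecidableEq (CylIdx V N ⊕ CylIdx V N))

/-- The iterated graph cylinder matrices: `A_{m+1} = [[A_m, I], [I, A_m]]`. -/
def iterCyl {V : Type*} [DecidableEq V] {R : Type*} [CommRing R] (A₀ : Matrix V V R) :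
    ∀ N : ℕ, Matrix (CylIdx V N) (CylIdx V N) R
  | 0 => A₀
  | N + 1 => Matrix.fromBlocks (iterCyl A₀ N) 1 1 (iterCyl A₀ N)


open Polynomial Matrix SimpleGraph Finset

section Helpers

variable {W : Type*} [Fintype W] [DecidableEq W]

lemma my_eval_charpoly (M : Matrix W W ℝ) (x : ℝ) :
    M.charpoly.eval x = (x • (1 : Matrix W W ℝ) - M).det := by
  rw [Matrix.charpoly, ← Polynomial.coe_evalRingHom, RingHom.map_det]
  congr 1
  ext i j
  by_cases h : i = j
  · subst h
    simp [Matrix.charmatrix_apply_eq, Matrix.sub_apply, Matrix.one_apply]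
  · simp [Matrix.charmatrix_apply_ne _ _ _ h, Matrix.sub_apply, Matrix.one_apply, h]

lemma my_isRoot_charpoly_iff (M : Matrix W W ℝ) (x : ℝ) :
    M.charpoly.IsRoot x ↔ ∃ v : W → ℝ, v ≠ 0 ∧ M.mulVec v = x • v := by
  rw [Polynomial.IsRoot.def, my_eval_charpoly, ← Matrix.exists_mulVec_eq_zero_iff]
  constructor
  · rintro ⟨v, hv, h0⟩
    refine ⟨v, hv, ?_⟩
    have : x • v - M.mulVec v = 0 := by
      rwa [Matrix.sub_mulVec, Matrix.smul_mulVec, Matrix.one_mulVec] at h0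
    exact (sub_eq_zero.mp this).symm
  · rintro ⟨v, hv, h0⟩
    refine ⟨v, hv, ?_⟩
    rw [Matrix.sub_mulVec, Matrix.smul_mulVec, Matrix.one_mulVec, h0, sub_self]

end Helpers

section Cyl

variable {W : Type*}

/-- The graph cylinder of `H`: two copies of `H` with matching vertices joined. -/
def cylG (H : SimpleGraph W) : SimpleGraph (W ⊕ W) where
  Adj x y :=
    match x, y with
    | Sum.inl a, Sum.inl b => H.Adj a b
    | Sum.inl a, Sum.inr b => a = b
    | Sum.inr a, Sum.inl b => a = b
    | Sum.inr a, Sum.inr b => H.Adj a b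
  symm := by constructor; rintro (a|a) (b|b) h <;> first | exact H.adj_symm h | exact h.symm
  loopless := by constructor; rintro (a|a) h <;> exact H.irrefl h

variable {H : SimpleGraph W}

@[simp] lemma cylG_adj_inl_inl {a b : W} : (cylG H).Adj (.inl a) (.inl b) ↔ H.Adj a b := Iff.rfl
@[simp] lemma cylG_adj_inl_inr {a b : W} : (cylG H).Adj (.inl a) (.inr b) ↔ a = b := Iff.rfl
@[simp] lemma cylG_adj_inr_inl {a b : W} : (cylG H).Adj (.inr a) (.inl b) ↔ a = b := Iff.rfl
@[simp] lemma cylG_adj_inr_inr {a b : W} : (cylG H).Adj (.inr a) (.inr b) ↔ H.Adj a b := Iff.rfl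

def cylGDecidable [DecidableEq W] (inst : DecidableRel H.Adj) : DecidableRel (cylG H).Adj :=
  fun x y =>
    match x, y with
    | Sum.inl a, Sum.inl b => inst a b
    | Sum.inl a, Sum.inr b => decEq a b
    | Sum.inr a, Sum.inl b => decEq a b
    | Sum.inr a, Sum.inr b => inst a b

/-- The hom from `H` into the left copy of its cylinder. -/
def cylInl : H →g cylG H := ⟨Sum.inl, fun h => h⟩
/-- The hom from `H` into the right copy of its cylinder. -/
def cylInr : H →g cylG H := ⟨Sum.inr, fun h => h⟩

lemma cylG_connected (hc : H.Connected) : (cylG H).Connected := by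
  haveI : Nonempty W := hc.nonempty
  rw [SimpleGraph.connected_iff]
  refine ⟨?_, ⟨Sum.inl (Classical.arbitrary W)⟩⟩
  have hl : ∀ a b : W, (cylG H).Reachable (Sum.inl a) (Sum.inl b) :=
    fun a b => (hc.preconnected a b).map cylInl
  have hr : ∀ a b : W, (cylG H).Reachable (Sum.inr a) (Sum.inr b) :=
    fun a b => (hc.preconnected a b).map cylInr
  have hx : ∀ a : W, (cylG H).Reachable (Sum.inl a) (Sum.inr a) :=
    fun a => SimpleGraph.Adj.reachable (by simp)
  rintro (a|a) (b|b)
  · exact hl a b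
  · exact (hl a b).trans (hx b)
  · exact (hx a).symm.trans (hl a b)
  · exact hr a b

lemma cylG_not_colorable (hnb : ¬ H.Colorable 2) : ¬ (cylG H).Colorable 2 := by
  rintro ⟨C⟩
  exact hnb ⟨SimpleGraph.Coloring.mk (fun a => C (Sum.inl a))
    (fun {a b} hab => C.valid (by simpa using hab))⟩

lemma cylG_regular [Fintype W] [DecidableEq W] [DecidableRel H.Adj] {k : ℕ}
    (hreg : H.IsRegularOfDegree k) :
    letI := cylGDecidable ‹DecidableRel H.Adj›
    (cylG H).IsRegularOfDegree (k + 1) := by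
  letI := cylGDecidable ‹DecidableRel H.Adj›
  rintro (a|a)
  · show ((cylG H).neighborFinset (Sum.inl a)).card = k + 1
    have h1 : (cylG H).neighborFinset (Sum.inl a) =
        (H.neighborFinset a).map ⟨Sum.inl, Sum.inl_injective⟩ ∪ {Sum.inr a} := by
      ext (b|b) <;> simp [eq_comm]
    rw [h1, Finset.card_union_of_disjoint (by simp), Finset.card_map,
      Finset.card_singleton]
    exact congrArg (· + 1) (hreg a)
  · show ((cylG H).neighborFinset (Sum.inr a)).card = k + 1
    have h1 : (cylG H).neighborFinset (Sum.inr a) =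
        (H.neighborFinset a).map ⟨Sum.inr, Sum.inr_injective⟩ ∪ {Sum.inl a} := by
      ext (b|b) <;> simp [eq_comm]
    rw [h1, Finset.card_union_of_disjoint (by simp), Finset.card_map,
      Finset.card_singleton]
    exact congrArg (· + 1) (hreg a)

lemma cylG_adjMatrix [Fintype W] [DecidableEq W] [DecidableRel H.Adj] :
    letI := cylGDecidable ‹DecidableRel H.Adj›
    (cylG H).adjMatrix ℝ = Matrix.fromBlocks (H.adjMatrix ℝ) 1 1 (H.adjMatrix ℝ) := by
  letI := cylGDecidable ‹DecidableRel H.Adj›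
  ext (i|i) (j|j) <;>
    simp [Matrix.one_apply, SimpleGraph.adjMatrix_apply]

end Cyl

section Spectral

variable {W : Type*} [Fintype W] [DecidableEq W]

lemma isRoot_charpoly_of_regular (H : SimpleGraph W) [DecidableRel H.Adj] [Nonempty W]
    {k : ℕ} (hreg : H.IsRegularOfDegree k) :
    (H.adjMatrix ℝ).charpoly.IsRoot (k : ℝ) := by
  rw [my_isRoot_charpoly_iff]
  refine ⟨Function.const W 1, ?_, ?_⟩
  · intro h
    have := congrFun h (Classical.arbitrary W)
    simp [Function.const] at this
  · funext i
    rw [SimpleGraph.adjMatrix_mulVec_const_apply_of_regular hreg]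
    simp [Function.const]

lemma not_isRoot_charpoly_neg (H : SimpleGraph W) [DecidableRel H.Adj] [Nonempty W]
    (hc : H.Connected) (hnb : ¬ H.Colorable 2) {k : ℕ} (hreg : H.IsRegularOfDegree k) :
    ¬ (H.adjMatrix ℝ).charpoly.IsRoot (-(k : ℝ)) := by
  rw [my_isRoot_charpoly_iff]
  rintro ⟨v, hv0, hv⟩
  set w : W → ℝ := fun i => |v i| with hwdef
  have hvi : ∀ i, ∑ u ∈ H.neighborFinset i, v u = -(k : ℝ) * v i := by
    intro i
    have := congrFun hv i
    rwa [SimpleGraph.adjMatrix_mulVec_apply, Pi.smul_apply, smul_eq_mul] at this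
  have hcard : ∀ i, (H.neighborFinset i).card = k := hreg
  -- pointwise inequality
  have hineq : ∀ i, (k : ℝ) * w i ≤ ∑ u ∈ H.neighborFinset i, w u := by
    intro i
    have h1 : |∑ u ∈ H.neighborFinset i, v u| ≤ ∑ u ∈ H.neighborFinset i, |v u| :=
      Finset.abs_sum_le_sum_abs _ _
    rw [hvi i, abs_mul, abs_neg, Nat.abs_cast] at h1
    exact h1
  -- sums are equal
  have hNf : ∀ i, ∑ u ∈ H.neighborFinset i, w u = ∑ u, if H.Adj i u then w u else 0 := by
    intro i
    rw [SimpleGraph.neighborFinset_eq_filter, Finset.sum_filter]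
  have hsum : ∑ i, ∑ u ∈ H.neighborFinset i, w u = ∑ i, (k : ℝ) * w i := by
    simp_rw [hNf]
    rw [Finset.sum_comm]
    refine Finset.sum_congr rfl fun u _ => ?_
    have hsymm : ∀ i, (if H.Adj i u then w u else 0) = (if H.Adj u i then w u else 0) :=
      fun i => by simp only [SimpleGraph.adj_comm]
    simp_rw [hsymm]
    rw [← Finset.sum_filter, Finset.sum_const, ← SimpleGraph.neighborFinset_eq_filter,
      hcard u, nsmul_eq_mul]
  -- hence equality pointwise
  have heq : ∀ i, (k : ℝ) * w i = ∑ u ∈ H.neighborFinset i, w u := by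
    by_contra hcon
    push_neg at hcon
    obtain ⟨i, hi⟩ := hcon
    have : ∑ i, (k : ℝ) * w i < ∑ i, ∑ u ∈ H.neighborFinset i, w u :=
      Finset.sum_lt_sum (fun j _ => hineq j) ⟨i, Finset.mem_univ i, lt_of_le_of_ne (hineq i) hi⟩
    linarith [hsum]
  -- maximum of w
  obtain ⟨i₀, hi₀⟩ := Finite.exists_max w
  set M : ℝ := w i₀ with hMdef
  have hMpos : 0 < M := by
    obtain ⟨j, hj⟩ := Function.ne_iff.mp hv0
    have : 0 < w j := abs_pos.mpr hj
    exact lt_of_lt_of_le this (hi₀ j)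
  -- neighbors of a max vertex are max
  have hmaxprop : ∀ i, w i = M → ∀ u ∈ H.neighborFinset i, w u = M := by
    intro i hi
    have hzero : ∑ u ∈ H.neighborFinset i, (M - w u) = 0 := by
      rw [Finset.sum_sub_distrib, Finset.sum_const, hcard i, ← heq i, hi, nsmul_eq_mul]
      ring
    intro u hu
    have := (Finset.sum_eq_zero_iff_of_nonneg
      (fun u _ => sub_nonneg.mpr (hi₀ u))).mp hzero u hu
    linarith
  -- propagate along walks: w ≡ M
  have key : ∀ (i j : W), H.Walk i j → w i = M → w j = M := by
    intro i j p
    induction p with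
    | nil => exact id
    | cons h q ih =>
      intro hi
      exact ih (hmaxprop _ hi _ ((SimpleGraph.mem_neighborFinset _ _ _).mpr h))
  have hall : ∀ i, w i = M := by
    intro i
    obtain ⟨p⟩ := hc.preconnected i₀ i
    exact key i₀ i p rfl
  -- neighbors flip sign
  have hflip : ∀ i, 0 < v i → ∀ u ∈ H.neighborFinset i, v u = -M := by
    intro i hi u hu
    have hwi : w i = v i := abs_of_pos hi
    have hzero : ∑ u ∈ H.neighborFinset i, (w u + v u) = 0 := by
      rw [Finset.sum_add_distrib, hvi i, ← heq i, hwi]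
      ring
    have h1 := (Finset.sum_eq_zero_iff_of_nonneg
      (fun u _ => by
        show (0 : ℝ) ≤ |v u| + v u
        linarith [neg_abs_le (v u)])).mp hzero u hu
    have h2 : w u = M := hall u
    show v u = -M
    have : w u + v u = 0 := h1
    linarith
  have hflip' : ∀ i, v i < 0 → ∀ u ∈ H.neighborFinset i, v u = M := by
    intro i hi u hu
    have hwi : w i = -v i := abs_of_neg hi
    have hzero : ∑ u ∈ H.neighborFinset i, (w u - v u) = 0 := by
      rw [Finset.sum_sub_distrib, hvi i, ← heq i, hwi]
      ring
    have h1 := (Finset.sum_eq_zero_iff_of_nonneg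
      (fun u _ => by
        show (0 : ℝ) ≤ |v u| - v u
        linarith [le_abs_self (v u)])).mp hzero u hu
    have h2 : w u = M := hall u
    have : w u - v u = 0 := h1
    linarith
  -- now build a 2-coloring
  have hvne : ∀ i, v i ≠ 0 := by
    intro i hi
    have : w i = M := hall i
    rw [hwdef] at this
    simp only [hi, abs_zero] at this
    linarith
  refine hnb ?_
  have C : H.Coloring Bool := SimpleGraph.Coloring.mk (fun i => decide (0 < v i))
    (by
      intro a b hab
      have hb : b ∈ H.neighborFinset a := (SimpleGraph.mem_neighborFinset _ _ _).mpr hab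
      rcases lt_or_gt_of_ne (hvne a) with ha | ha
      · have := hflip' a ha b hb
        simp [this, ha, hMpos, not_lt.mpr (le_of_lt ha)]
      · have := hflip a ha b hb
        have hbneg : v b < 0 := by rw [this]; linarith
        simp [ha, not_lt.mpr (le_of_lt hbneg)])
  simpa using C.colorable

end Spectral


instance instNonemptyCylIdx (V : Type*) [Nonempty V] : ∀ N, Nonempty (CylIdx V N)
  | 0 => ‹Nonempty V›
  | N + 1 => letI := instNonemptyCylIdx V N
             inferInstanceAs (Nonempty (CylIdx V N ⊕ CylIdx V N))

lemma iterCyl_spec {V : Type*} [Fintype V] [DecidableEq V] [Nonempty V]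
    (G : SimpleGraph V) [DecidableRel G.Adj]
    (hconn : G.Connected) (hnonbip : ¬ G.Colorable 2)
    (k : ℕ) (hreg : G.IsRegularOfDegree k) :
    ∀ N : ℕ, ∃ (H : SimpleGraph (CylIdx V N)) (inst : DecidableRel H.Adj),
      (letI := inst
       H.adjMatrix ℝ = iterCyl (G.adjMatrix ℝ) N ∧
       H.Connected ∧ ¬ H.Colorable 2 ∧ H.IsRegularOfDegree (k + N))
  | 0 => ⟨G, ‹DecidableRel G.Adj›, by refine ⟨?_, hconn, hnonbip, by exact hreg⟩; simp [iterCyl]; rfl⟩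
  | N + 1 => by
    obtain ⟨H, inst, hA, hc, hnb, hr⟩ := iterCyl_spec G hconn hnonbip k hreg N
    letI := inst
    refine ⟨cylG H, cylGDecidable inst, ?_, cylG_connected hc, cylG_not_colorable hnb, ?_⟩
    · show (letI := cylGDecidable inst; (cylG H).adjMatrix ℝ) =
        Matrix.fromBlocks (iterCyl (G.adjMatrix ℝ) N) 1 1 (iterCyl (G.adjMatrix ℝ) N)
      rw [← hA]
      exact cylG_adjMatrix
    · have h2 := cylG_regular (H := H) hr
      have h3 : k + (N + 1) = (k + N) + 1 := by ring
      rw [h3]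
      exact h2

theorem iterCyl_nonbipartite_asymmetric {V : Type*} [Fintype V] [DecidableEq V] [Nonempty V]
    (G : SimpleGraph V) [DecidableRel G.Adj]
    (hconn : G.Connected) (hnonbip : ¬ G.Colorable 2)
    (k : ℕ) (hreg : G.IsRegularOfDegree k) (N : ℕ) :
    (iterCyl (G.adjMatrix ℝ) N).charpoly.IsRoot ((k : ℝ) + N) ∧
    ¬ (iterCyl (G.adjMatrix ℝ) N).charpoly.IsRoot (-((k : ℝ) + N)) ∧
    (iterCyl (G.adjMatrix ℝ) N).charpoly.roots.map (fun x => -x) ≠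
      (iterCyl (G.adjMatrix ℝ) N).charpoly.roots := by
  obtain ⟨H, inst, hA, hc, hnb, hr⟩ := iterCyl_spec G hconn hnonbip k hreg N
  letI := inst
  rw [← hA]
  have hcast : ((k + N : ℕ) : ℝ) = (k : ℝ) + N := by push_cast; ring
  have h1 : (H.adjMatrix ℝ).charpoly.IsRoot ((k : ℝ) + N) := by
    have := isRoot_charpoly_of_regular H hr
    rwa [hcast] at this
  have h2 : ¬ (H.adjMatrix ℝ).charpoly.IsRoot (-((k : ℝ) + N)) := by
    have := not_isRoot_charpoly_neg H hc hnb hr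
    rwa [hcast] at this
  refine ⟨h1, h2, ?_⟩
  intro hmapeq
  apply h2
  have hne : (H.adjMatrix ℝ).charpoly ≠ 0 := (Matrix.charpoly_monic _).ne_zero
  have hroot : ((k : ℝ) + N) ∈ (H.adjMatrix ℝ).charpoly.roots :=
    (Polynomial.mem_roots hne).mpr h1
  have hmem : -((k : ℝ) + N) ∈ (H.adjMatrix ℝ).charpoly.roots.map (fun x => -x) :=
    Multiset.mem_map_of_mem _ hroot
  rw [hmapeq] at hmem
  exact Polynomial.isRoot_of_mem_roots hmem
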